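/- If the Seidel complement G * v contains an induced subgraph H isomorphic to P5, House, or Bull, and G is (P5, House, Bull)-free, then v is not a vertex of H. -/

import Mathlib

namespace SimpleGraph

variable {V W : Type*}

/-- Seidel complement of `G` at vertex `v`. -/
def seidel (G : SimpleGraph V) (v : V) : SimpleGraph V where
  Adj x y := Xor' (G.Adj x y)
    ((G.Adj v x ∧ ¬ G.Adj v y ∧ y ≠ v) ∨ (G.Adj v y ∧ ¬ G.Adj v x ∧ x ≠ v))
  symm := by
    constructor
    intro x y h
    unfold Xor' Xor at h ⊢
    have hc := G.adj_comm x y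
    tauto
  loopless := by
    constructor
    intro x h
    unfold Xor' Xor at h
    simp only [G.irrefl] at h
    tauto

/-- A module (homogeneous set in the weak sense) of a graph. -/
def IsModule (G : SimpleGraph V) (M : Set V) : Prop :=
  ∀ x ∉ M, (∀ y ∈ M, G.Adj x y) ∨ (∀ y ∈ M, ¬ G.Adj x y)

/-- A graph is prime w.r.t. modular decomposition. -/
def IsPrime (G : SimpleGraph V) [Fintype V] : Prop :=
  3 ≤ Fintype.card V ∧
    ∀ M : Set V, G.IsModule M → M = ∅ ∨ (∃ x, M = {x}) ∨ M = Set.univ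

/-- `G` has no induced subgraph isomorphic to `H`. -/
def IndFree (G : SimpleGraph V) (H : SimpleGraph W) : Prop :=
  IsEmpty (H ↪g G)

/-- The bull: triangle 0,1,2 with pendant vertices 3 (at 0) and 4 (at 1). -/
def bull : SimpleGraph (Fin 5) :=
  SimpleGraph.fromRel (fun x y =>
    (x, y) ∈ [((0 : Fin 5), (1 : Fin 5)), (1, 2), (0, 2), (0, 3), (1, 4)])

/-- The house: complement of the path on 5 vertices. -/
def house : SimpleGraph (Fin 5) := (pathGraph 5)ᶜ

/-- `G` is (P5, House, Bull)-free. -/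
def PHBFree (G : SimpleGraph V) : Prop :=
  G.IndFree (pathGraph 5) ∧ G.IndFree house ∧ G.IndFree bull

/-- The half graph: `b i` adjacent to `w j` iff `i + j ≤ m + 1` (1-based). -/
def halfGraph (m : ℕ) : SimpleGraph (Fin m ⊕ Fin m) :=
  SimpleGraph.fromRel (fun x y =>
    match x, y with
    | Sum.inl i, Sum.inr j => i.val + j.val < m
    | _, _ => False)

/-- A buoy partition of a set of vertices. -/
def IsBuoy (G : SimpleGraph V) (A : Fin 5 → Set V) : Prop :=
  (∀ i, (A i).Nonempty) ∧
  (∀ i j, i ≠ j → Disjoint (A i) (A j)) ∧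
  (∀ i, ∀ x ∈ A i, ∀ y ∈ A (i + 1), G.Adj x y) ∧
  (∀ i j, i ≠ j → j ≠ i + 1 → i ≠ j + 1 → ∀ x ∈ A i, ∀ y ∈ A j, ¬ G.Adj x y) ∧
  (∀ B : Fin 5 → Set V,
    ((∀ i j, i ≠ j → Disjoint (B i) (B j)) ∧
     (∀ i, ∀ x ∈ B i, ∀ y ∈ B (i + 1), G.Adj x y) ∧
     (∀ i j, i ≠ j → j ≠ i + 1 → i ≠ j + 1 → ∀ x ∈ B i, ∀ y ∈ B j, ¬ G.Adj x y) ∧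
     (∀ i, A i ⊆ B i)) → B = A)

end SimpleGraph

namespace SimpleGraph

variable {V₀ : Type*}

lemma seidel_adj (G : SimpleGraph V₀) (v x y : V₀) :
    (G.seidel v).Adj x y ↔ Xor' (G.Adj x y)
      ((G.Adj v x ∧ ¬ G.Adj v y ∧ y ≠ v) ∨ (G.Adj v y ∧ ¬ G.Adj v x ∧ x ≠ v)) :=
  Iff.rfl

lemma seidel_seidel (G : SimpleGraph V₀) (v : V₀) : (G.seidel v).seidel v = G := by
  ext x y
  simp only [seidel_adj, Xor', Xor, G.irrefl, false_and, and_false, false_or, or_false, ne_eq,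
    not_true_eq_false, not_false_eq_true, and_true]
  by_cases hbx : G.Adj v x <;> by_cases hcy : G.Adj v y <;>
    by_cases hx : x = v <;> by_cases hy : y = v <;> simp_all <;> tauto

lemma seidel_pull {W₀ : Type*} {H : SimpleGraph W₀} {K : SimpleGraph V₀}
    (f : H ↪g K) (i : W₀) (x y : W₀) :
    (K.seidel (f i)).Adj (f x) (f y) ↔ (H.seidel i).Adj x y := by
  rw [seidel_adj, seidel_adj, f.map_adj_iff, f.map_adj_iff, f.map_adj_iff,
    f.injective.ne_iff, f.injective.ne_iff]

/-- Pull back an embedding into a Seidel complement. -/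
def seidelPullEmb {W₀ : Type*} {H : SimpleGraph W₀} {G : SimpleGraph V₀} {v : V₀}
    (f : H ↪g G.seidel v) (i : W₀) (hi : f i = v) : (H.seidel i) ↪g G where
  toFun := f
  inj' := f.injective
  map_rel_iff' := by
    intro x y
    have h := seidel_pull f i x y
    rw [hi, seidel_seidel] at h
    exact h

/-- Build an embedding of graphs on `Fin 5` from an explicit injection. -/
def mkEmb (A B : SimpleGraph (Fin 5)) (σ : Fin 5 → Fin 5) (hinj : Function.Injective σ)
    (h : ∀ x y, B.Adj x y ↔ A.Adj (σ x) (σ y)) : B ↪g A where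
  toFun := σ
  inj' := hinj
  map_rel_iff' := fun {x y} => (h x y).symm

instance : DecidableRel (pathGraph 5).Adj := fun _ _ =>
  decidable_of_iff _ (pathGraph_adj).symm

instance (G : SimpleGraph (Fin 5)) [DecidableRel G.Adj] (v : Fin 5) :
    DecidableRel (G.seidel v).Adj := fun x y => by
  unfold seidel Xor'; exact inferInstanceAs (Decidable (_ ∨ _))

instance : DecidableRel bull.Adj := fun x y =>
  decidable_of_iff _ (fromRel_adj _ x y).symm

instance : DecidableRel house.Adj := fun x y => by
  unfold house; exact inferInstanceAs (Decidable (_ ∧ _))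

end SimpleGraph

open SimpleGraph in
theorem stmt5 {V : Type*} (G : SimpleGraph V) (v : V) (hG : G.PHBFree)
    (H : SimpleGraph (Fin 5)) (hH : H = pathGraph 5 ∨ H = house ∨ H = bull)
    (f : H ↪g G.seidel v) : v ∉ Set.range f := by
  rintro ⟨i, hi⟩
  rcases hH with rfl | rfl | rfl <;> fin_cases i
  · exact (hG.2.2).false ((seidelPullEmb f _ hi).comp
      (mkEmb _ _ ![1,3,4,0,2] (by decide) (by decide)))
  · exact (hG.2.1).false ((seidelPullEmb f _ hi).comp
      (mkEmb _ _ ![0,2,3,1,4] (by decide) (by decide)))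
  · exact (hG.1).false ((seidelPullEmb f _ hi).comp
      (mkEmb _ _ ![0,3,2,1,4] (by decide) (by decide)))
  · exact (hG.2.1).false ((seidelPullEmb f _ hi).comp
      (mkEmb _ _ ![0,3,1,2,4] (by decide) (by decide)))
  · exact (hG.2.2).false ((seidelPullEmb f _ hi).comp
      (mkEmb _ _ ![1,3,0,2,4] (by decide) (by decide)))
  · exact (hG.2.2).false ((seidelPullEmb f _ hi).comp
      (mkEmb _ _ ![0,2,4,3,1] (by decide) (by decide)))
  · exact (hG.1).false ((seidelPullEmb f _ hi).comp
      (mkEmb _ _ ![0,2,3,1,4] (by decide) (by decide)))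
  · exact (hG.2.1).false ((seidelPullEmb f _ hi).comp
      (mkEmb _ _ ![0,3,2,1,4] (by decide) (by decide)))
  · exact (hG.1).false ((seidelPullEmb f _ hi).comp
      (mkEmb _ _ ![0,3,1,2,4] (by decide) (by decide)))
  · exact (hG.2.2).false ((seidelPullEmb f _ hi).comp
      (mkEmb _ _ ![4,2,0,1,3] (by decide) (by decide)))
  · exact (hG.2.1).false ((seidelPullEmb f _ hi).comp
      (mkEmb _ _ ![0,4,1,3,2] (by decide) (by decide)))
  · exact (hG.2.1).false ((seidelPullEmb f _ hi).comp
      (mkEmb _ _ ![1,3,0,4,2] (by decide) (by decide)))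
  · exact (hG.2.2).false ((seidelPullEmb f _ hi).comp
      (mkEmb _ _ ![0,1,2,4,3] (by decide) (by decide)))
  · exact (hG.1).false ((seidelPullEmb f _ hi).comp
      (mkEmb _ _ ![3,0,4,1,2] (by decide) (by decide)))
  · exact (hG.1).false ((seidelPullEmb f _ hi).comp
      (mkEmb _ _ ![2,0,3,1,4] (by decide) (by decide)))
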